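/- If neither $G_1$ nor $G_2$ is a complete graph (and both are connected with at least 3 vertices so that each contains an induced path of length 2), then the binomial edge ideal $J_{G_1,G_2}$ is not a radical ideal. -/

import Mathlib

open MvPolynomial

/-- The binomial edge ideal of a pair of graphs. -/
noncomputable def pairIdeal (K : Type) [Field K] {α β : Type}
    (G1 : SimpleGraph α) (G2 : SimpleGraph β) : Ideal (MvPolynomial (α × β) K) :=
  Ideal.span {p | ∃ i j k l, G1.Adj i j ∧ G2.Adj k l ∧
    p = X (i, k) * X (j, l) - X (i, l) * X (j, k)}

/-- Any connected non-complete graph contains an induced path of length 2. -/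
lemma exists_induced_path {V : Type*} {G : SimpleGraph V}
    (hc : G.Connected) (h : G ≠ ⊤) :
    ∃ a b c, G.Adj a b ∧ G.Adj b c ∧ ¬ G.Adj a c ∧ a ≠ c := by
  have hex : ∃ u w, u ≠ w ∧ ¬ G.Adj u w := by
    by_contra hcon
    push_neg at hcon
    apply h
    ext u w
    simp only [SimpleGraph.top_adj]
    exact ⟨fun h' => h'.ne, fun h' => hcon u w h'⟩
  obtain ⟨u, w, huw, hna⟩ := hex
  obtain ⟨p, hp⟩ := (hc.preconnected u w).exists_walk_length_eq_dist
  cases p with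
  | nil => exact absurd rfl huw
  | @cons _ v₁ _ h₁ p₁ =>
    cases p₁ with
    | nil => exact absurd h₁ hna
    | @cons _ v₂ _ h₂ p₂ =>
      refine ⟨u, v₁, v₂, h₁, h₂, ?_, ?_⟩
      · intro hadj
        have hle := SimpleGraph.dist_le (SimpleGraph.Walk.cons hadj p₂)
        simp only [SimpleGraph.Walk.length_cons] at hle hp
        omega
      · rintro rfl
        have hle := SimpleGraph.dist_le p₂
        simp only [SimpleGraph.Walk.length_cons] at hp
        omega

set_option synthInstance.maxHeartbeats 1000000 in
/-- There is a commutative `K`-algebra containing elements `s`, `t` with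
`s² = t² = 0` but `st ≠ 0`, namely `K[s,t]/(s²,t²)`. -/
lemma exists_nilpotents (K : Type) [Field K] :
    ∃ (R : Type) (_ : CommRing R) (_ : Algebra K R) (s t : R),
      s * s = 0 ∧ t * t = 0 ∧ s * t ≠ 0 := by
  refine ⟨DualNumber (DualNumber K), inferInstance, inferInstance,
    TrivSqZeroExt.inl DualNumber.eps, DualNumber.eps, ?_, DualNumber.eps_mul_eps, ?_⟩
  · rw [TrivSqZeroExt.inl_mul_inl, DualNumber.eps_mul_eps, TrivSqZeroExt.inl_zero]
  · intro h0
    have h1' : TrivSqZeroExt.inl (M := DualNumber K) DualNumber.eps *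
        DualNumber.eps = TrivSqZeroExt.inr (DualNumber.eps (R := K)) := by
      rw [show (DualNumber.eps : DualNumber (DualNumber K)) =
          TrivSqZeroExt.inr (1 : DualNumber K) from rfl,
        TrivSqZeroExt.inl_mul_inr, smul_eq_mul, mul_one]
    rw [h1'] at h0
    have h2' := congrArg TrivSqZeroExt.snd h0
    rw [TrivSqZeroExt.snd_inr, TrivSqZeroExt.snd_zero] at h2'
    have h3' := congrArg TrivSqZeroExt.snd h2'
    rw [DualNumber.snd_eps, TrivSqZeroExt.snd_zero] at h3'
    exact one_ne_zero h3'

/-- An auxiliary assignment of values to the variables, supported on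
a `3 × 3` block of indices. -/
def vfun {m n : ℕ} (a b c : Fin m) (d e f : Fin n) {R : Type} [CommRing R]
    (s t : R) : Fin m × Fin n → R := fun p =>
  if p.1 = a then (if p.2 = e then s else if p.2 = f then 1 else 0)
  else if p.1 = b then
    (if p.2 = d then s else if p.2 = e then s * t else if p.2 = f then t else 0)
  else if p.1 = c then (if p.2 = d then 1 else if p.2 = e then t else 0)
  else 0

lemma vfun_row_zero {m n : ℕ} (a b c : Fin m) (d e f : Fin n) {R : Type} [CommRing R]
    (s t : R) (i : Fin m) (hi : ¬(i = a ∨ i = b ∨ i = c)) (k : Fin n) :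
    vfun a b c d e f s t (i, k) = 0 := by
  push_neg at hi
  simp [vfun, hi.1, hi.2.1, hi.2.2]

lemma vfun_col_zero {m n : ℕ} (a b c : Fin m) (d e f : Fin n) {R : Type} [CommRing R]
    (s t : R) (k : Fin n) (hk : ¬(k = d ∨ k = e ∨ k = f)) (i : Fin m) :
    vfun a b c d e f s t (i, k) = 0 := by
  push_neg at hk
  simp only [vfun]
  split_ifs <;> simp_all

/-- The key computation: the chosen matrix of values kills all the
relevant `2 × 2` minors. -/
lemma vfun_minor {m n : ℕ} (a b c : Fin m) (d e f : Fin n) {R : Type} [CommRing R]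
    (s t : R) (hs : s * s = 0) (ht : t * t = 0)
    (hab : a ≠ b) (hbc : b ≠ c) (hac : a ≠ c)
    (hde : d ≠ e) (hef : e ≠ f) (hdf : d ≠ f)
    (i j : Fin m) (k l : Fin n)
    (hrow : (i = a ∧ j = b) ∨ (i = b ∧ j = a) ∨ (i = b ∧ j = c) ∨ (i = c ∧ j = b) ∨
      ¬(i = a ∨ i = b ∨ i = c) ∨ ¬(j = a ∨ j = b ∨ j = c))
    (hcol : (k = d ∧ l = e) ∨ (k = e ∧ l = d) ∨ (k = e ∧ l = f) ∨ (k = f ∧ l = e) ∨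
      ¬(k = d ∨ k = e ∨ k = f) ∨ ¬(l = d ∨ l = e ∨ l = f)) :
    vfun a b c d e f s t (i, k) * vfun a b c d e f s t (j, l) -
      vfun a b c d e f s t (i, l) * vfun a b c d e f s t (j, k) = 0 := by
  rcases hrow with hr | hr | hr | hr | hi | hj
  pick_goal 5
  · rw [vfun_row_zero a b c d e f s t i hi, vfun_row_zero a b c d e f s t i hi]; ring1
  pick_goal 5
  · rw [vfun_row_zero a b c d e f s t j hj, vfun_row_zero a b c d e f s t j hj]; ring1
  all_goals (
    rcases hcol with hcc | hcc | hcc | hcc | hk | hl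
    <;> first
      | (rw [vfun_col_zero a b c d e f s t k hk, vfun_col_zero a b c d e f s t k hk]; ring1)
      | (rw [vfun_col_zero a b c d e f s t l hl, vfun_col_zero a b c d e f s t l hl]; ring1)
      | (obtain ⟨rfl, rfl⟩ := hr
         obtain ⟨rfl, rfl⟩ := hcc
         simp only [vfun, hab, hbc, hac, hde, hef, hdf, Ne.symm hab, Ne.symm hbc, Ne.symm hac,
           Ne.symm hde, Ne.symm hef, Ne.symm hdf, eq_self_iff_true, if_true, if_false,
           ite_true, ite_false]
         first
           | ring1
           | (linear_combination hs)
           | (linear_combination -hs)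
           | (linear_combination ht)
           | (linear_combination -ht)) )

/-- Classification of edges of a graph relative to an induced path `a - b - c`. -/
lemma row_cases {V : Type*} {G : SimpleGraph V} (a b c : V) (hnac : ¬ G.Adj a c)
    (i j : V) (hij : G.Adj i j) :
    (i = a ∧ j = b) ∨ (i = b ∧ j = a) ∨ (i = b ∧ j = c) ∨ (i = c ∧ j = b) ∨
      ¬(i = a ∨ i = b ∨ i = c) ∨ ¬(j = a ∨ j = b ∨ j = c) := by
  by_cases hi : i = a ∨ i = b ∨ i = c
  · by_cases hjj : j = a ∨ j = b ∨ j = c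
    · rcases hi with rfl | rfl | rfl <;> rcases hjj with rfl | rfl | rfl <;>
        first
          | (exact absurd rfl hij.ne)
          | (exact absurd hij hnac)
          | (exact absurd hij.symm hnac)
          | tauto
    · tauto
  · tauto

lemma vfun_values {m n : ℕ} (a b c : Fin m) (d e f : Fin n) {R : Type} [CommRing R]
    (s t : R) (hab : a ≠ b) (hbc : b ≠ c) (hac : a ≠ c)
    (hde : d ≠ e) (hef : e ≠ f) (hdf : d ≠ f) :
    vfun a b c d e f s t (b, e) = s * t ∧ vfun a b c d e f s t (a, d) = 0 ∧
      vfun a b c d e f s t (c, f) = 0 ∧ vfun a b c d e f s t (a, f) = 1 ∧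
      vfun a b c d e f s t (c, d) = 1 := by
  refine ⟨?_, ?_, ?_, ?_, ?_⟩ <;>
    simp [vfun, hab, hbc, hac, hde, hef, hdf, Ne.symm hab, Ne.symm hbc, Ne.symm hac,
      Ne.symm hde, Ne.symm hef, Ne.symm hdf]

set_option maxHeartbeats 1000000 in
/-- If neither `G₁` nor `G₂` is complete (both connected with at least 3 vertices),
then `J_{G₁,G₂}` is not a radical ideal. -/
theorem stmt2 (K : Type) [Field K] (m n : ℕ) (hm : 3 ≤ m) (hn : 3 ≤ n)
    (G1 : SimpleGraph (Fin m)) (G2 : SimpleGraph (Fin n))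
    (h1c : G1.Connected) (h2c : G2.Connected)
    (h1 : G1 ≠ ⊤) (h2 : G2 ≠ ⊤) :
    ¬ (pairIdeal K G1 G2).IsRadical := by
  obtain ⟨a, b, c, hab, hbc, hnac, hace⟩ := exists_induced_path h1c h1
  obtain ⟨d, e, f, hde, hef, hndf, hdfe⟩ := exists_induced_path h2c h2
  intro hrad
  set J := pairIdeal K G1 G2 with hJ
  -- the witness element
  set g : MvPolynomial (Fin m × Fin n) K :=
    X (b, e) * (X (a, d) * X (c, f) - X (a, f) * X (c, d)) with hg
  -- the four generators coming from the two induced paths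
  have mem1 : (X (a, d) * X (b, e) - X (a, e) * X (b, d) : MvPolynomial (Fin m × Fin n) K) ∈ J :=
    Ideal.subset_span ⟨a, b, d, e, hab, hde, rfl⟩
  have mem2 : (X (a, e) * X (b, f) - X (a, f) * X (b, e) : MvPolynomial (Fin m × Fin n) K) ∈ J :=
    Ideal.subset_span ⟨a, b, e, f, hab, hef, rfl⟩
  have mem3 : (X (b, d) * X (c, e) - X (b, e) * X (c, d) : MvPolynomial (Fin m × Fin n) K) ∈ J :=
    Ideal.subset_span ⟨b, c, d, e, hbc, hde, rfl⟩
  have mem4 : (X (b, e) * X (c, f) - X (b, f) * X (c, e) : MvPolynomial (Fin m × Fin n) K) ∈ J :=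
    Ideal.subset_span ⟨b, c, e, f, hbc, hef, rfl⟩
  -- `g ^ 2` lies in the ideal, via an explicit representation
  have hg2 : g ^ 2 =
      ((X (a, d) * X (c, f) - X (a, f) * X (c, d)) * (X (b, e) * X (c, f))) *
        (X (a, d) * X (b, e) - X (a, e) * X (b, d)) +
      ((X (a, d) * X (c, f) - X (a, f) * X (c, d)) * (X (b, d) * X (c, e))) *
        (X (a, e) * X (b, f) - X (a, f) * X (b, e)) +
      ((X (a, d) * X (c, f) - X (a, f) * X (c, d)) * (X (a, f) * X (b, e))) *
        (X (b, d) * X (c, e) - X (b, e) * X (c, d)) +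
      ((X (a, d) * X (c, f) - X (a, f) * X (c, d)) * (X (a, e) * X (b, d))) *
        (X (b, e) * X (c, f) - X (b, f) * X (c, e)) := by
    rw [hg]; ring
  have hgsq : g ^ 2 ∈ J := by
    rw [hg2]
    exact add_mem (add_mem (add_mem (Ideal.mul_mem_left _ _ mem1)
      (Ideal.mul_mem_left _ _ mem2)) (Ideal.mul_mem_left _ _ mem3))
      (Ideal.mul_mem_left _ _ mem4)
  have hgJ : g ∈ J := hrad ⟨2, hgsq⟩
  -- now evaluate into `K[s,t]/(s²,t²)` to derive a contradiction
  obtain ⟨R, _, _, s, t, hs, ht, hst⟩ := exists_nilpotents K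
  set v : Fin m × Fin n → R := vfun a b c d e f s t with hv
  -- the evaluation kills every generator of the ideal
  have hker : J ≤ RingHom.ker ((aeval v : MvPolynomial (Fin m × Fin n) K →ₐ[K] R) :
      MvPolynomial (Fin m × Fin n) K →+* R) := by
    rw [hJ, pairIdeal, Ideal.span_le]
    rintro q ⟨i, j, k, l, hij, hkl, rfl⟩
    have hrow : (i = a ∧ j = b) ∨ (i = b ∧ j = a) ∨ (i = b ∧ j = c) ∨ (i = c ∧ j = b) ∨
        ¬(i = a ∨ i = b ∨ i = c) ∨ ¬(j = a ∨ j = b ∨ j = c) :=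
      row_cases a b c hnac i j hij
    have hcol : (k = d ∧ l = e) ∨ (k = e ∧ l = d) ∨ (k = e ∧ l = f) ∨ (k = f ∧ l = e) ∨
        ¬(k = d ∨ k = e ∨ k = f) ∨ ¬(l = d ∨ l = e ∨ l = f) :=
      row_cases d e f hndf k l hkl
    simp only [SetLike.mem_coe, RingHom.mem_ker, RingHom.coe_coe, map_sub, map_mul, aeval_X]
    rw [hv]
    exact vfun_minor a b c d e f s t hs ht hab.ne hbc.ne hace hde.ne hef.ne hdfe
      i j k l hrow hcol
  have h0 : (aeval v) g = 0 := hker hgJ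
  rw [hg] at h0
  simp only [map_sub, map_mul, aeval_X] at h0
  have hvals := vfun_values a b c d e f s t hab.ne hbc.ne hace hde.ne hef.ne hdfe
  rw [← hv] at hvals
  obtain ⟨hbe, had, hcf, haf, hcd⟩ := hvals
  rw [hbe, had, hcf, haf, hcd] at h0
  apply hst
  linear_combination -h0
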